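/- arXiv:1012.2186 — 3 statements merged into one kernel-verified Lean document; each statement's English description precedes it below -/
import Mathlib

section
/- Let K be an infinite field, n ≥ 1, and 1 ≤ m ≤ d with m ≥ 2n. Then for a general homogeneous F ∈ K[x₀,…,xₙ] of degree d (i.e., for all F in a nonempty Zariski-open subset of the space of degree-d forms), there is no pair (p, L) of a point p ∈ Pⁿ and a line L ∋ p such that L meets the hypersurface {F=0} at p with multiplicity ≥ m. -/
open Polynomial

section Auxiliary

open MvPolynomial


lemma pow_card_le_of_annihilator_free {K : Type*} [Field K] {ι τ : Type*} [Fintype ι] [Fintype τ]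
    (ψ : ι → MvPolynomial τ K) (hinj : Function.Injective (MvPolynomial.aeval ψ :
      MvPolynomial ι K →ₐ[K] MvPolynomial τ K)) (r : ℕ) :
    (r + 1) ^ Fintype.card ι ≤
      (Fintype.card ι * (r * Finset.univ.sup fun i => (ψ i).totalDegree) + 1) ^ Fintype.card τ := by
  classical
  set E := Finset.univ.sup fun i => (ψ i).totalDegree with hE
  set u := Fintype.card ι * (r * E) with hu
  set s : (ι → Fin (r + 1)) → (ι →₀ ℕ) :=
    fun v => Finsupp.equivFunOnFinite.symm (fun i => (v i : ℕ)) with hs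
  have hsinj : Function.Injective s := by
    intro v w hvw
    funext i
    have := DFunLike.congr_fun hvw i
    simp only [hs, Finsupp.equivFunOnFinite_symm_apply_apply] at this
    exact Fin.ext this
  have hmono_li : LinearIndependent K
      (fun v : ι → Fin (r + 1) => (monomial (s v) (1 : K) : MvPolynomial ι K)) := by
    have := (basisMonomials ι K).linearIndependent.comp s hsinj
    simpa [MvPolynomial.coe_basisMonomials, Function.comp_def] using this
  have hfam_li : LinearIndependent K
      (fun v : ι → Fin (r + 1) => aeval ψ (monomial (s v) (1 : K))) := by
    have := hmono_li.map' (MvPolynomial.aeval ψ).toLinearMap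
      (LinearMap.ker_eq_bot.mpr hinj)
    simpa [Function.comp_def] using this
  have hmem : ∀ v, aeval ψ (monomial (s v) (1 : K)) ∈ restrictTotalDegree τ K u := by
    intro v
    rw [mem_restrictTotalDegree]
    rw [MvPolynomial.aeval_monomial, map_one, one_mul]
    calc ((s v).prod fun i k => ψ i ^ k).totalDegree
        ≤ ∑ i ∈ (s v).support, (ψ i ^ (s v) i).totalDegree := totalDegree_finset_prod _ _
      _ ≤ ∑ i ∈ (s v).support, r * E := by
          refine Finset.sum_le_sum fun i _ => ?_
          calc (ψ i ^ (s v) i).totalDegree ≤ (s v) i * (ψ i).totalDegree :=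
                totalDegree_pow _ _
            _ ≤ r * E := by
                refine Nat.mul_le_mul ?_ ?_
                · simpa [hs] using (Fin.is_le (v i))
                · rw [hE]; exact Finset.le_sup (f := fun i => (ψ i).totalDegree) (Finset.mem_univ i)
      _ ≤ Fintype.card ι * (r * E) := by
          rw [Finset.sum_const, smul_eq_mul]
          exact Nat.mul_le_mul_right _ (Finset.card_le_univ _)
  set b : (ι → Fin (r + 1)) → restrictTotalDegree τ K u :=
    fun v => ⟨aeval ψ (monomial (s v) (1 : K)), hmem v⟩ with hb
  have hb_li : LinearIndependent K b := by
    apply LinearIndependent.of_comp (restrictTotalDegree τ K u).subtype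
    simpa [hb, Function.comp_def] using hfam_li
  have h1 : (r + 1) ^ Fintype.card ι ≤ Module.finrank K (restrictTotalDegree τ K u) := by
    have := hb_li.fintype_card_le_finrank
    simpa [Fintype.card_fun] using this
  have h2 : Module.finrank K (restrictTotalDegree τ K u) ≤
      Module.finrank K (restrictDegree τ K u) :=
    Submodule.finrank_mono (restrictTotalDegree_le_restrictDegree τ K u)
  have hfin : Finite ↥{f : τ →₀ ℕ | ∀ i, f i ≤ u} :=
    ((Set.Finite.pi' fun _ ↦ Set.finite_le_nat _).preimage DFunLike.coe_injective.injOn).to_subtype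
  haveI := Fintype.ofFinite ↥{f : τ →₀ ℕ | ∀ i, f i ≤ u}
  have h3 : Module.finrank K (restrictDegree τ K u) =
      Fintype.card ↥{f : τ →₀ ℕ | ∀ i, f i ≤ u} :=
    Module.finrank_eq_card_basis (basisRestrictSupport K _)
  have h4 : Fintype.card ↥{f : τ →₀ ℕ | ∀ i, f i ≤ u} ≤ (u + 1) ^ Fintype.card τ := by
    have : Fintype.card ↥{f : τ →₀ ℕ | ∀ i, f i ≤ u} ≤ Fintype.card (τ → Fin (u + 1)) := by
      apply Fintype.card_le_of_injective
        (fun f => fun i => (⟨f.1 i, Nat.lt_succ_of_le (f.2 i)⟩ : Fin (u + 1)))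
      intro f g hfg
      ext i
      exact congrArg Fin.val (congrFun hfg i)
    simpa [Fintype.card_fun] using this
  omega

lemma exists_annihilator {K : Type*} [Field K] {ι τ : Type*} [Fintype ι] [Fintype τ]
    (h : Fintype.card τ < Fintype.card ι) (ψ : ι → MvPolynomial τ K) :
    ∃ P : MvPolynomial ι K, P ≠ 0 ∧ MvPolynomial.aeval ψ P = 0 := by
  by_contra hcon
  push_neg at hcon
  have halg : AlgebraicIndependent K ψ := by
    rw [algebraicIndependent_iff]
    intro p hp
    by_contra hp0
    exact hcon p hp0 hp
  have hinj := algebraicIndependent_iff_injective_aeval.mp halg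
  set Nc := Fintype.card ι with hNc
  set Dc := Fintype.card τ with hDc
  set E := Finset.univ.sup fun i => (ψ i).totalDegree with hE
  have hN1 : 1 ≤ Nc := lt_of_le_of_lt (Nat.zero_le _) h
  set c := Nc * E + 1 with hc
  set r := c ^ (Nc - 1) with hr
  have key := pow_card_le_of_annihilator_free ψ hinj r
  rw [← hE, ← hNc, ← hDc] at key
  have h2 : Nc * (r * E) + 1 ≤ c * (r + 1) := by
    have : Nc * (r * E) = (Nc * E) * r := by ring
    rw [this, hc]
    nlinarith
  have h3 : (Nc * (r * E) + 1) ^ Dc ≤ (c * (r + 1)) ^ Dc := Nat.pow_le_pow_left h2 _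
  have h4 : (c * (r + 1)) ^ Dc ≤ (c * (r + 1)) ^ (Nc - 1) := by
    apply Nat.pow_le_pow_right
    · have : 1 ≤ c := by omega
      nlinarith
    · omega
  have h5 : (c * (r + 1)) ^ (Nc - 1) = r * (r + 1) ^ (Nc - 1) := by
    rw [mul_pow, ← hr]
  have h6 : (r + 1) ^ Nc = (r + 1) * (r + 1) ^ (Nc - 1) := by
    conv_lhs => rw [show Nc = (Nc - 1) + 1 by omega]
    ring
  have h7 : (r + 1) * (r + 1) ^ (Nc - 1) ≤ r * (r + 1) ^ (Nc - 1) := by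
    calc (r + 1) * (r + 1) ^ (Nc - 1) = (r + 1) ^ Nc := h6.symm
      _ ≤ (Nc * (r * E) + 1) ^ Dc := key
      _ ≤ (c * (r + 1)) ^ Dc := h3
      _ ≤ (c * (r + 1)) ^ (Nc - 1) := h4
      _ = r * (r + 1) ^ (Nc - 1) := h5
  have hpos : 0 < (r + 1) ^ (Nc - 1) := Nat.pow_pos (by omega)
  have := Nat.le_of_mul_le_mul_right (by linarith [h7] : (r + 1) * (r + 1) ^ (Nc - 1) ≤ r * (r + 1) ^ (Nc - 1)) hpos
  omega

section Restrict

variable {K : Type*} [CommRing K] {σ : Type*} [DecidableEq σ]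


lemma coeff_line_restrict (g : MvPolynomial σ K) {d : ℕ}
    (hgs : ∀ s ∈ g.support, Finsupp.degree s = d) {i j : σ} (hij : i ≠ j)
    {k : ℕ} (hk : k ≤ d) :
    (MvPolynomial.aeval
        (fun l => if l = i then 1 else if l = j then (Polynomial.X : Polynomial K) else 0) g).coeff
        k
      = g.coeff (Finsupp.single i (d - k) + Finsupp.single j k) := by
  set f : σ → Polynomial K := fun l => if l = i then 1 else if l = j then Polynomial.X else 0
    with hf
  set bm : σ →₀ ℕ := Finsupp.single i (d - k) + Finsupp.single j k with hbm
  have hbmj : bm j = k := by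
    simp [hbm, Finsupp.single_apply, hij]
  have hbmsupp : bm.support ⊆ {i, j} := by
    refine Finset.Subset.trans Finsupp.support_add ?_
    refine Finset.union_subset ?_ ?_
    · exact Finset.Subset.trans Finsupp.support_single_subset (by simp)
    · exact Finset.Subset.trans Finsupp.support_single_subset (by simp)
  have hterm : ∀ s ∈ g.support,
      (MvPolynomial.aeval f (monomial s (g.coeff s))).coeff k
        = if s = bm then g.coeff s else 0 := by
    intro s hs
    rw [MvPolynomial.aeval_monomial]
    by_cases hsupp : s.support ⊆ {i, j}
    · have hrepr : s = Finsupp.single i (s i) + Finsupp.single j (s j) := by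
        ext l
        by_cases hli : l = i
        · subst hli; simp [Finsupp.single_apply, hij, Ne.symm hij]
        · by_cases hlj : l = j
          · subst hlj; simp [Finsupp.single_apply, hij, Ne.symm hij]
          · have : l ∉ s.support := fun hmem => by
              rcases Finset.mem_insert.mp (hsupp hmem) with h | h
              · exact hli h
              · exact hlj (Finset.mem_singleton.mp h)
            simp [Finsupp.notMem_support_iff.mp this, Finsupp.single_apply,
              Ne.symm hli, Ne.symm hlj]
      have hsum : s i + s j = d := by
        have h1 : ∑ l ∈ s.support, s l = ∑ l ∈ ({i, j} : Finset σ), s l :=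
          Finset.sum_subset hsupp (fun l _ hl => Finsupp.notMem_support_iff.mp hl)
        rw [Finset.sum_pair hij] at h1
        have hdeg := hgs s hs
        rw [Finsupp.degree_apply] at hdeg
        omega
      have hprod : (s.prod fun l e => f l ^ e) = Polynomial.X ^ s j := by
        conv_lhs => rw [hrepr]
        rw [Finsupp.prod_add_index (fun l _ => pow_zero (f l))
          (fun l _ e1 e2 => pow_add (f l) e1 e2)]
        rw [Finsupp.prod_single_index (h := fun l e => f l ^ e) (pow_zero _),
          Finsupp.prod_single_index (h := fun l e => f l ^ e) (pow_zero _)]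
        have hfi : f i = 1 := if_pos rfl
        have hfj : f j = Polynomial.X := by
          rw [hf]; simp [Ne.symm hij, hij]
        rw [hfi, hfj, one_pow, one_mul]
      rw [hprod, Polynomial.algebraMap_eq, Polynomial.coeff_C_mul, Polynomial.coeff_X_pow]
      by_cases hjk : s j = k
      · rw [if_pos hjk.symm, mul_one]
        have hseq : s = bm := by
          rw [hrepr, hbm, hjk]
          congr 1
          congr 1
          omega
        rw [if_pos hseq]
      · rw [if_neg (fun h => hjk h.symm), mul_zero]
        rw [if_neg]
        intro hseq
        exact hjk (by rw [hseq, hbmj])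
    · have : ∃ l ∈ s.support, l ∉ ({i, j} : Finset σ) := by
        by_contra hcon
        push_neg at hcon
        exact hsupp hcon
      obtain ⟨l, hl, hlnot⟩ := this
      have hfl : f l = 0 := by
        rw [hf]
        simp only [Finset.mem_insert, Finset.mem_singleton, not_or] at hlnot
        simp [hlnot.1, hlnot.2]
      have hprod : (s.prod fun l e => f l ^ e) = 0 := by
        apply Finset.prod_eq_zero hl
        show f l ^ s l = 0
        rw [hfl, zero_pow (Finsupp.mem_support_iff.mp hl)]
      rw [hprod, mul_zero, Polynomial.coeff_zero]
      rw [if_neg]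
      intro hseq
      subst hseq
      exact hlnot (hbmsupp hl)
  conv_lhs => rw [g.as_sum]
  rw [map_sum, Polynomial.finset_sum_coeff]
  rw [Finset.sum_congr rfl hterm, Finset.sum_ite_eq' g.support bm (fun s => g.coeff s)]
  by_cases hmem : bm ∈ g.support
  · rw [if_pos hmem]
  · rw [if_neg hmem]
    exact (MvPolynomial.notMem_support_iff.mp hmem).symm

lemma X_pow_dvd_line_eval (g : MvPolynomial σ K) {m : ℕ} {i j : σ} (hij : i ≠ j)
    (hsup : ∀ s ∈ g.support, m ≤ s j) (q r : Polynomial K) :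
    (Polynomial.X : Polynomial K) ^ m ∣
      MvPolynomial.aeval
        (fun l => if l = i then q else if l = j then Polynomial.X * r else 0) g := by
  set f : σ → Polynomial K := fun l => if l = i then q else if l = j then Polynomial.X * r else 0
    with hf
  conv_rhs => rw [g.as_sum]
  rw [map_sum]
  apply Finset.dvd_sum
  intro s hs
  rw [MvPolynomial.aeval_monomial]
  rcases Nat.eq_zero_or_pos m with hm | hm
  · rw [hm, pow_zero]; exact one_dvd _
  have hjmem : j ∈ s.support := by
    rw [Finsupp.mem_support_iff]
    have := hsup s hs
    omega
  have hfj : f j = Polynomial.X * r := by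
    rw [hf]; simp [Ne.symm hij]
  rw [Finsupp.prod, ← Finset.mul_prod_erase _ _ hjmem]
  apply Dvd.dvd.mul_left
  apply Dvd.dvd.mul_right
  rw [hfj, mul_pow]
  exact Dvd.dvd.mul_right (pow_dvd_pow _ (hsup s hs)) _


end Restrict

section Transfer

variable {K : Type*} [CommRing K] {σ : Type*}

lemma support_degree_of_isHomogeneous {g : MvPolynomial σ K} {d : ℕ} (hg : g.IsHomogeneous d) :
    ∀ s ∈ g.support, Finsupp.degree s = d := fun s hs => by
  have := hg (MvPolynomial.mem_support_iff.mp hs)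
  rwa [Finsupp.degree_eq_weight_one]

lemma dvd_transfer (F : MvPolynomial σ K) {d m : ℕ} (hF : F.IsHomogeneous d)
    (hmd : m ≤ d) (a b : σ → K) (u v w : K)
    (hdvd : (Polynomial.X : Polynomial K) ^ m ∣
      MvPolynomial.aeval (fun k => Polynomial.C (a k) + Polynomial.C (b k) * Polynomial.X) F) :
    (Polynomial.X : Polynomial K) ^ m ∣
      MvPolynomial.aeval
        (fun k => Polynomial.C (u * a k) + Polynomial.C (v * a k + w * b k) * Polynomial.X) F := by
  set g : MvPolynomial (Fin 2) K :=
    MvPolynomial.aeval (fun k => MvPolynomial.C (a k) * MvPolynomial.X (0 : Fin 2)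
      + MvPolynomial.C (b k) * MvPolynomial.X 1) F with hgdef
  have hg : g.IsHomogeneous d := by
    have := hF.aeval (fun k => MvPolynomial.C (a k) * MvPolynomial.X (0 : Fin 2)
        + MvPolynomial.C (b k) * MvPolynomial.X 1)
      (fun k => (isHomogeneous_C_mul_X (a k) 0).add (isHomogeneous_C_mul_X (b k) 1))
    simpa [hgdef] using this
  have h01 : (0 : Fin 2) ≠ 1 := by decide
  have h1 : MvPolynomial.aeval
      (fun l : Fin 2 => if l = 0 then (1 : Polynomial K) else if l = 1 then Polynomial.X else 0) g
      = MvPolynomial.aeval (fun k => Polynomial.C (a k) + Polynomial.C (b k) * Polynomial.X) F := by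
    rw [hgdef, comp_aeval_apply]
    have hfun : (fun k => MvPolynomial.aeval
        (fun l : Fin 2 => if l = 0 then (1 : Polynomial K) else if l = 1 then Polynomial.X else 0)
        (MvPolynomial.C (a k) * MvPolynomial.X (0 : Fin 2)
          + MvPolynomial.C (b k) * MvPolynomial.X 1))
        = fun k => Polynomial.C (a k) + Polynomial.C (b k) * Polynomial.X := by
      funext k
      simp [Polynomial.algebraMap_eq]
    rw [hfun]
  have hco : ∀ k, k < m →
      g.coeff (Finsupp.single (0 : Fin 2) (d - k) + Finsupp.single 1 k) = 0 := by
    intro k hkm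
    rw [← coeff_line_restrict g (support_degree_of_isHomogeneous hg) h01
      (le_trans (le_of_lt hkm) hmd), h1]
    exact Polynomial.X_pow_dvd_iff.mp hdvd k hkm
  have hsup : ∀ s ∈ g.support, m ≤ s 1 := by
    intro s hs
    by_contra hcon
    push_neg at hcon
    have hdeg := support_degree_of_isHomogeneous hg s hs
    have hrepr : s = Finsupp.single (0 : Fin 2) (s 0) + Finsupp.single 1 (s 1) := by
      ext l
      fin_cases l <;> simp [Finsupp.single_apply]
    have hsum : s 0 + s 1 = d := by
      have : Finsupp.degree s = s 0 + s 1 := by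
        rw [Finsupp.degree_apply, Finset.sum_subset (Finset.subset_univ s.support)
          (fun l _ hl => Finsupp.notMem_support_iff.mp hl), Fin.sum_univ_two]
      omega
    have hzero : MvPolynomial.coeff s g = 0 := by
      have h0 : s 0 = d - s 1 := by omega
      rw [hrepr, h0]
      exact hco (s 1) hcon
    exact (MvPolynomial.mem_support_iff.mp hs) hzero
  have hmain := X_pow_dvd_line_eval g h01 hsup
    (Polynomial.C u + Polynomial.C v * Polynomial.X) (Polynomial.C w)
  rw [hgdef, comp_aeval_apply] at hmain
  have heq : (MvPolynomial.aeval (fun k =>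
      MvPolynomial.aeval (fun l : Fin 2 => if l = 0 then Polynomial.C u + Polynomial.C v * Polynomial.X
        else if l = 1 then Polynomial.X * Polynomial.C w else 0)
        (MvPolynomial.C (a k) * MvPolynomial.X (0 : Fin 2)
          + MvPolynomial.C (b k) * MvPolynomial.X 1)) F)
      = MvPolynomial.aeval
        (fun k => Polynomial.C (u * a k) + Polynomial.C (v * a k + w * b k) * Polynomial.X) F := by
    have hfun : (fun k => MvPolynomial.aeval
        (fun l : Fin 2 => if l = 0 then Polynomial.C u + Polynomial.C v * Polynomial.X
          else if l = 1 then Polynomial.X * Polynomial.C w else 0)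
        (MvPolynomial.C (a k) * MvPolynomial.X (0 : Fin 2)
          + MvPolynomial.C (b k) * MvPolynomial.X 1))
        = fun k => Polynomial.C (u * a k) + Polynomial.C (v * a k + w * b k) * Polynomial.X := by
      funext k
      simp [Polynomial.algebraMap_eq]
      ring
    rw [hfun]
  rwa [heq] at hmain

end Transfer

set_option maxHeartbeats 1000000 in
lemma chart_annihilator {K : Type*} [Field K] (n d m : ℕ) (hn : 1 ≤ n) (hm1 : 1 ≤ m)
    (hmd : m ≤ d) (h2n : 2 * n ≤ m) (i j : Fin (n + 1)) (hij : i ≠ j) :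
    ∃ P : MvPolynomial {s : Fin (n + 1) →₀ ℕ // s.sum (fun _ e => e) = d} K,
      P ≠ 0 ∧
        ∀ F : MvPolynomial (Fin (n + 1)) K, F.IsHomogeneous d →
          ∀ a b : Fin (n + 1) → K, a i = 1 → b i = 0 → b j = 1 →
            ((Polynomial.X : Polynomial K) ^ m ∣
              MvPolynomial.aeval
                (fun k => Polynomial.C (a k) + Polynomial.C (b k) * Polynomial.X) F) →
            MvPolynomial.eval (fun s => F.coeff s.1) P = 0 := by
  classical
  set bmon : ℕ → (Fin (n+1) →₀ ℕ) := fun k => Finsupp.single i (d - k) + Finsupp.single j k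
    with hbmon
  have hbmon_sum : ∀ k, k < m → (bmon k).sum (fun _ e => e) = d := by
    intro k hk
    rw [hbmon]
    rw [Finsupp.sum_add_index' (fun _ => rfl) (fun _ e1 e2 => rfl)]
    rw [Finsupp.sum_single_index rfl, Finsupp.sum_single_index rfl]
    omega
  have hbmon_apply : ∀ k, (bmon k) j = k := by
    intro k
    simp [hbmon, Finsupp.single_apply, hij]
  haveI : Finite {s : Fin (n+1) →₀ ℕ // s.sum (fun _ e => e) = d} := by
    apply Finite.of_injective (f := fun s => (fun l => (⟨s.1 l, Nat.lt_succ_of_le (by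
      rcases s with ⟨s, hs⟩
      by_cases hl : l ∈ s.support
      · calc s l ≤ ∑ t ∈ s.support, s t := Finset.single_le_sum (fun _ _ => Nat.zero_le _) hl
        _ = d := hs
      · simp [Finsupp.notMem_support_iff.mp hl])⟩ : Fin (d+1))))
    intro s t hst
    ext l
    exact congrArg Fin.val (congrFun hst l)
  haveI := Fintype.ofFinite {s : Fin (n+1) →₀ ℕ // s.sum (fun _ e => e) = d}
  set Sd := {s : Fin (n+1) →₀ ℕ // s.sum (fun _ e => e) = d} with hSdd
  set bmS : Fin m → Sd := fun k => ⟨bmon k.1, hbmon_sum k.1 k.2⟩ with hbmS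
  have hbmS_inj : Function.Injective bmS := by
    intro k1 k2 hk
    have h1 : bmon k1.1 = bmon k2.1 := congrArg Subtype.val hk
    have h2 := congrArg (fun s => s j) h1
    simp only [hbmon_apply] at h2
    exact Fin.ext h2
  have hbadcard : m ≤ Fintype.card {s : Sd // ∃ k, k < m ∧ s.1 = bmon k} := by
    have hinj2 : Function.Injective (fun k : Fin m => (⟨bmS k, ⟨k.1, k.2, rfl⟩⟩ :
        {s : Sd // ∃ k, k < m ∧ s.1 = bmon k})) := by
      intro k1 k2 hk
      exact hbmS_inj (congrArg Subtype.val hk)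
    simpa using Fintype.card_le_of_injective _ hinj2
  have hA : Fintype.card {k : Fin (n+1) // ¬k = i} = n := by
    rw [Fintype.card_subtype_compl, Fintype.card_subtype_eq, Fintype.card_fin]
    omega
  have hB : Fintype.card {k : Fin (n+1) // ¬(k = i ∨ k = j)} = n + 1 - 2 := by
    rw [Fintype.card_subtype_compl, Fintype.card_fin]
    congr 1
    rw [Fintype.card_subtype]
    have heq2 : (Finset.univ.filter fun k : Fin (n+1) => k = i ∨ k = j) = {i, j} := by
      ext k
      simp [Finset.mem_insert, Finset.mem_singleton]
    rw [heq2, Finset.card_insert_of_notMem (by simp [hij]), Finset.card_singleton]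
  have hC : Fintype.card {s : Sd // ¬∃ k, k < m ∧ s.1 = bmon k}
      = Fintype.card Sd - Fintype.card {s : Sd // ∃ k, k < m ∧ s.1 = bmon k} :=
    Fintype.card_subtype_compl _
  have hCle : Fintype.card {s : Sd // ∃ k, k < m ∧ s.1 = bmon k} ≤ Fintype.card Sd :=
    Fintype.card_subtype_le _
  have hcards : Fintype.card ((({k : Fin (n+1) // ¬k = i}) ⊕
      ({k : Fin (n+1) // ¬(k = i ∨ k = j)})) ⊕ ({s : Sd // ¬∃ k, k < m ∧ s.1 = bmon k}))
      < Fintype.card Sd := by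
    rw [Fintype.card_sum, Fintype.card_sum, hA, hB, hC]
    omega
  -- generic objects
  set τK := (({k : Fin (n+1) // ¬k = i}) ⊕ ({k : Fin (n+1) // ¬(k = i ∨ k = j)})) ⊕
    ({s : Sd // ¬∃ k, k < m ∧ s.1 = bmon k}) with hτK
  set av : Fin (n+1) → MvPolynomial τK K := fun k =>
    if h : k = i then 1 else MvPolynomial.X (Sum.inl (Sum.inl ⟨k, h⟩)) with havdef
  set bv : Fin (n+1) → MvPolynomial τK K := fun k =>
    if h : k = i ∨ k = j then (if k = i then 0 else 1)
    else MvPolynomial.X (Sum.inl (Sum.inr ⟨k, h⟩)) with hbvdef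
  set SBgen : Fin (n+1) → MvPolynomial (Fin (n+1)) (MvPolynomial τK K) := fun k =>
    if k = i then MvPolynomial.X i
    else if k = j then MvPolynomial.C (-av j) * MvPolynomial.X i + MvPolynomial.X j
    else MvPolynomial.X k - MvPolynomial.C (av k - av j * bv k) * MvPolynomial.X i -
      MvPolynomial.C (bv k) * MvPolynomial.X j with hSBgendef
  set Ggen : MvPolynomial (Fin (n+1)) (MvPolynomial τK K) :=
    ∑ γ : {s : Sd // ¬∃ k, k < m ∧ s.1 = bmon k},
      monomial γ.1.1 (MvPolynomial.X (Sum.inr γ) : MvPolynomial τK K) with hGgendef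
  set Fgen : MvPolynomial (Fin (n+1)) (MvPolynomial τK K) :=
    MvPolynomial.aeval SBgen Ggen with hFgendef
  set ψ : Sd → MvPolynomial τK K := fun s => Fgen.coeff s.1 with hψdef
  obtain ⟨P, hP0, hPann⟩ := exists_annihilator hcards ψ
  refine ⟨P, hP0, ?_⟩
  intro F hF a b hai hbi hbj hdvd
  -- K-level forward substitution
  set SA : Fin (n+1) → MvPolynomial (Fin (n+1)) K := fun k =>
    MvPolynomial.C (a k) * MvPolynomial.X i + MvPolynomial.C (b k) * MvPolynomial.X j +
      (if k = i ∨ k = j then 0 else MvPolynomial.X k) with hSAdef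
  set G0 : MvPolynomial (Fin (n+1)) K := MvPolynomial.aeval SA F with hG0def
  have hG0hom : G0.IsHomogeneous d := by
    have hSAhom : ∀ k, (SA k).IsHomogeneous 1 := by
      intro k
      rw [hSAdef]
      refine ((isHomogeneous_C_mul_X _ _).add (isHomogeneous_C_mul_X _ _)).add ?_
      split
      · exact isHomogeneous_zero _ _ _
      · exact isHomogeneous_X _ _
    have := hF.aeval SA hSAhom
    simpa [hG0def] using this
  have hG0supp := support_degree_of_isHomogeneous hG0hom
  have hline : MvPolynomial.aeval
      (fun l => if l = i then 1 else if l = j then (Polynomial.X : Polynomial K) else 0) G0 =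
      MvPolynomial.aeval (fun k => Polynomial.C (a k) + Polynomial.C (b k) * Polynomial.X) F := by
    rw [hG0def, comp_aeval_apply]
    have hfun : (fun k => MvPolynomial.aeval
        (fun l => if l = i then 1 else if l = j then (Polynomial.X : Polynomial K) else 0)
        (SA k)) = fun k => Polynomial.C (a k) + Polynomial.C (b k) * Polynomial.X := by
      funext k
      simp only [hSAdef]
      simp only [map_add, map_mul, MvPolynomial.aeval_C, MvPolynomial.aeval_X,
        Polynomial.algebraMap_eq]
      by_cases hk : k = i ∨ k = j
      · rw [if_pos hk, map_zero, add_zero]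
        simp [Ne.symm hij]
      · rw [if_neg hk, MvPolynomial.aeval_X]
        push_neg at hk
        simp [Ne.symm hij, hk.1, hk.2]
    rw [hfun]
  have hbadcoeff : ∀ k, k < m → G0.coeff (bmon k) = 0 := by
    intro k hk
    rw [hbmon]
    rw [← coeff_line_restrict G0 hG0supp hij (le_trans hk.le hmd), hline]
    exact Polynomial.X_pow_dvd_iff.mp hdvd k hk
  -- the evaluation point
  set veval : τK → K := Sum.elim (Sum.elim (fun k => a k.1) (fun k => b k.1))
    (fun γ => G0.coeff γ.1.1) with hvevaldef
  have haev : ∀ k, MvPolynomial.eval veval (av k) = a k := by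
    intro k
    simp only [havdef]
    by_cases hk : k = i
    · subst hk
      rw [dif_pos rfl, map_one, hai]
    · rw [dif_neg hk, MvPolynomial.eval_X]
      rfl
  have hbev : ∀ k, MvPolynomial.eval veval (bv k) = b k := by
    intro k
    simp only [hbvdef]
    by_cases hk : k = i ∨ k = j
    · rw [dif_pos hk]
      by_cases hk2 : k = i
      · subst hk2
        rw [if_pos rfl, map_zero, hbi]
      · rw [if_neg hk2, map_one, (hk.resolve_left hk2 : k = j), hbj]
    · rw [dif_neg hk, MvPolynomial.eval_X]
      rfl
  -- the K-level inverse substitution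
  set SB0 : Fin (n+1) → MvPolynomial (Fin (n+1)) K := fun k =>
    if k = i then MvPolynomial.X i
    else if k = j then MvPolynomial.C (-(a j)) * MvPolynomial.X i + MvPolynomial.X j
    else MvPolynomial.X k - MvPolynomial.C (a k - a j * b k) * MvPolynomial.X i -
      MvPolynomial.C (b k) * MvPolynomial.X j with hSB0def
  have hmapSB : ∀ k, MvPolynomial.map (MvPolynomial.eval veval) (SBgen k) = SB0 k := by
    intro k
    simp only [hSBgendef, hSB0def]
    by_cases hk : k = i
    · rw [if_pos hk, if_pos hk, MvPolynomial.map_X]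
    · rw [if_neg hk, if_neg hk]
      by_cases hk2 : k = j
      · rw [if_pos hk2, if_pos hk2]
        simp [map_add, map_mul, map_neg, MvPolynomial.map_C, MvPolynomial.map_X, haev, hbev]
      · rw [if_neg hk2, if_neg hk2]
        simp [map_sub, map_mul, MvPolynomial.map_C, MvPolynomial.map_X, haev, hbev]
  have hmapG : MvPolynomial.map (MvPolynomial.eval veval) Ggen = G0 := by
    apply MvPolynomial.ext
    intro t
    rw [MvPolynomial.coeff_map, hGgendef, MvPolynomial.coeff_sum]
    have hterm : ∀ γ : {s : Sd // ¬∃ k, k < m ∧ s.1 = bmon k},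
        MvPolynomial.coeff t (monomial γ.1.1 (MvPolynomial.X (Sum.inr γ) : MvPolynomial τK K))
        = if γ.1.1 = t then MvPolynomial.X (Sum.inr γ) else 0 := fun γ =>
      MvPolynomial.coeff_monomial _ _ _
    rw [Finset.sum_congr rfl (fun γ _ => hterm γ), map_sum]
    have hterm2 : ∀ γ : {s : Sd // ¬∃ k, k < m ∧ s.1 = bmon k},
        MvPolynomial.eval veval (if γ.1.1 = t then MvPolynomial.X (Sum.inr γ) else 0)
        = if γ.1.1 = t then G0.coeff γ.1.1 else 0 := by
      intro γ
      split
      · rw [MvPolynomial.eval_X]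
        rfl
      · rw [map_zero]
    rw [Finset.sum_congr rfl (fun γ _ => hterm2 γ)]
    by_cases ht : (t.sum fun _ e => e) = d ∧ ¬∃ k, k < m ∧ t = bmon k
    · set γ0 : {s : Sd // ¬∃ k, k < m ∧ s.1 = bmon k} := ⟨⟨t, ht.1⟩, ht.2⟩ with hγ0
      rw [Finset.sum_eq_single γ0]
      · rw [if_pos rfl]
      · intro γ _ hne
        rw [if_neg]
        intro hγt
        exact hne (Subtype.ext (Subtype.ext hγt))
      · intro habs
        exact absurd (Finset.mem_univ γ0) habs
    · have hzero : MvPolynomial.coeff t G0 = 0 := by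
        rcases not_and_or.mp ht with ht1 | ht2
        · by_contra hne
          exact ht1 (hG0supp t (MvPolynomial.mem_support_iff.mpr hne))
        · rw [not_not] at ht2
          obtain ⟨k, hk, hteq⟩ := ht2
          rw [hteq]
          exact hbadcoeff k hk
      rw [hzero]
      apply Finset.sum_eq_zero
      intro γ _
      rw [if_neg]
      intro hγt
      rcases not_and_or.mp ht with ht1 | ht2
      · exact ht1 (hγt ▸ γ.1.2)
      · rw [not_not] at ht2
        exact γ.2 (by rw [hγt]; exact ht2)
  have h23 : MvPolynomial.map (MvPolynomial.eval veval) Fgen = MvPolynomial.aeval SB0 G0 := by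
    have hringeq : ((MvPolynomial.map (MvPolynomial.eval veval)).comp
        (algebraMap (MvPolynomial τK K) (MvPolynomial (Fin (n+1)) (MvPolynomial τK K))))
        = ((algebraMap K (MvPolynomial (Fin (n+1)) K)).comp
            (MvPolynomial.eval veval : MvPolynomial τK K →+* K)) := by
      refine RingHom.ext fun r => ?_
      simp only [RingHom.comp_apply, MvPolynomial.algebraMap_eq, MvPolynomial.map_C]
    calc MvPolynomial.map (MvPolynomial.eval veval) Fgen
        = eval₂Hom ((MvPolynomial.map (MvPolynomial.eval veval)).comp
            (algebraMap (MvPolynomial τK K) (MvPolynomial (Fin (n+1)) (MvPolynomial τK K))))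
            (fun k => MvPolynomial.map (MvPolynomial.eval veval) (SBgen k)) Ggen := by
          rw [hFgendef]
          exact map_aeval _ _ _
      _ = eval₂Hom ((algebraMap K (MvPolynomial (Fin (n+1)) K)).comp
            (MvPolynomial.eval veval : MvPolynomial τK K →+* K)) SB0 Ggen := by
          rw [hringeq, funext hmapSB]
      _ = MvPolynomial.aeval SB0 (MvPolynomial.map (MvPolynomial.eval veval) Ggen) := by
          rw [aeval_eq_eval₂Hom, eval₂Hom_map_hom]
      _ = MvPolynomial.aeval SB0 G0 := by rw [hmapG]
  have hSB0G0 : MvPolynomial.aeval SB0 G0 = F := by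
    rw [hG0def, comp_aeval_apply]
    have hfun : (fun k => MvPolynomial.aeval SB0 (SA k)) = MvPolynomial.X := by
      funext k
      simp only [hSAdef]
      simp only [map_add, map_mul, MvPolynomial.aeval_C, MvPolynomial.aeval_X,
        MvPolynomial.algebraMap_eq]
      by_cases hk : k = i
      · rw [if_pos (Or.inl hk), map_zero, add_zero]
        simp only [hSB0def]
        simp [hk, Ne.symm hij, hij, hai, hbi]
      · by_cases hk2 : k = j
        · rw [if_pos (Or.inr hk2), map_zero, add_zero]
          simp only [hSB0def]
          simp [hk, hk2, Ne.symm hij, hij, hbj, map_neg, map_one]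
        · rw [if_neg (by tauto), MvPolynomial.aeval_X]
          simp only [hSB0def]
          simp [hk, hk2, Ne.symm hij, hij, map_neg, map_sub, map_mul]
          ring
    rw [hfun]
    exact aeval_X_left_apply F
  have hψeval : ∀ s : Sd, MvPolynomial.eval veval (ψ s) = F.coeff s.1 := by
    intro s
    rw [hψdef]
    rw [← MvPolynomial.coeff_map, h23, hSB0G0]
  have haeval_eq : ∀ {τ' : Type} (v : τ' → K) (x : MvPolynomial τ' K),
      MvPolynomial.aeval (R := K) v x = MvPolynomial.eval v x := fun v x => by
    rw [← MvPolynomial.coe_aeval_eq_eval]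
    rfl
  have hcomp := MvPolynomial.comp_aeval_apply
    (φ := (MvPolynomial.aeval veval : MvPolynomial τK K →ₐ[K] K)) (f := ψ) (p := P)
  rw [hPann, map_zero] at hcomp
  have hfuneq : (fun s : Sd => MvPolynomial.aeval (R := K) veval (ψ s))
      = fun s : Sd => F.coeff s.1 := by
    funext s
    rw [haeval_eq, hψeval]
  rw [hfuneq] at hcomp
  calc MvPolynomial.eval (fun s : Sd => F.coeff s.1) P
      = MvPolynomial.aeval (fun s : Sd => F.coeff s.1) P := (haeval_eq _ _).symm
    _ = 0 := hcomp.symm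

end Auxiliary

/-- Let `K` be an infinite field, `n ≥ 1`, `1 ≤ m ≤ d` with `m ≥ 2n`. Then for
a general homogeneous `F` of degree `d` — i.e. for all `F` in a nonempty Zariski-open subset of
the space of degree-`d` forms, expressed by the nonvanishing of a nonzero polynomial `P` in the
coefficients of `F` (indexed by the degree-`d` monomials) — there is no pair `(p, L)` of a point
`p ∈ Pⁿ` and a line `L ∋ p` (given by `p = [a]` and direction `b`, with `a, b` linearly
independent) such that `L` meets `{F = 0}` at `p` with multiplicity `≥ m`. -/
theorem stmt2 {K : Type*} [Field K] [Infinite K] (n d m : ℕ)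
    (hn : 1 ≤ n) (hm1 : 1 ≤ m) (hmd : m ≤ d) (h2n : 2 * n ≤ m) :
    ∃ P : MvPolynomial {s : Fin (n + 1) →₀ ℕ // s.sum (fun _ e => e) = d} K,
      P ≠ 0 ∧
        ∀ F : MvPolynomial (Fin (n + 1)) K, F.IsHomogeneous d →
          MvPolynomial.eval (fun s => F.coeff s.1) P ≠ 0 →
            ¬ ∃ a b : Fin (n + 1) → K, LinearIndependent K ![a, b] ∧
                (Polynomial.X : Polynomial K) ^ m ∣
                  MvPolynomial.aeval
                    (fun i : Fin (n + 1) =>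
                      Polynomial.C (a i) + Polynomial.C (b i) * Polynomial.X) F := by
  classical
  set Pc : Fin (n+1) × Fin (n+1) → MvPolynomial {s : Fin (n + 1) →₀ ℕ //
      s.sum (fun _ e => e) = d} K := fun p =>
    if h : p.1 ≠ p.2 then (chart_annihilator n d m hn hm1 hmd h2n p.1 p.2 h).choose else 1
    with hPc
  refine ⟨∏ p : Fin (n+1) × Fin (n+1), Pc p, ?_, ?_⟩
  · rw [Finset.prod_ne_zero_iff]
    intro p _
    rw [hPc]
    dsimp only
    by_cases hp : p.1 ≠ p.2
    · rw [dif_pos hp]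
      exact (chart_annihilator n d m hn hm1 hmd h2n p.1 p.2 hp).choose_spec.1
    · rw [dif_neg hp]
      exact one_ne_zero
  intro F hF heval hbad
  obtain ⟨a, b, hli, hdvd⟩ := hbad
  have hlin := Fintype.linearIndependent_iff.mp hli
  -- a ≠ 0
  have ha0 : a ≠ 0 := by
    intro h
    have := hlin ![1, 0] (by
      rw [Fin.sum_univ_two]
      simp [h]) 0
    simp at this
  obtain ⟨i, hai⟩ := Function.ne_iff.mp ha0
  simp only [Pi.zero_apply] at hai
  set u : K := (a i)⁻¹ with hu
  have hua : u * a i = 1 := inv_mul_cancel₀ hai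
  set b2 : Fin (n+1) → K := fun k => b k - (b i * u) * a k with hb2
  have hb20 : b2 ≠ 0 := by
    intro h
    have hb2' : ∀ k, b k = (b i * u) * a k := by
      intro k
      have := congrFun h k
      simp only [hb2, Pi.zero_apply] at this
      linear_combination this
    have := hlin ![b i * u, -1] (by
      rw [Fin.sum_univ_two]
      funext k
      simp [hb2' k]) 1
    simp at this
  obtain ⟨j, hb2j⟩ := Function.ne_iff.mp hb20
  simp only [Pi.zero_apply] at hb2j
  have hb2i : b2 i = 0 := by
    simp only [hb2]
    linear_combination (-(b i)) * hua
  have hji : j ≠ i := by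
    intro h
    rw [h, hb2i] at hb2j
    exact hb2j rfl
  set w : K := (b2 j)⁻¹ with hw
  have hwb : w * b2 j = 1 := inv_mul_cancel₀ hb2j
  set v : K := -(w * (b i * u)) with hv
  set a' : Fin (n+1) → K := fun k => u * a k with ha'
  set b' : Fin (n+1) → K := fun k => v * a k + w * b k with hb'
  have ha'i : a' i = 1 := hua
  have hb'val : ∀ k, b' k = w * b2 k := by
    intro k
    simp only [hb', hb2, hv]
    ring
  have hb'i : b' i = 0 := by rw [hb'val, hb2i, mul_zero]
  have hb'j : b' j = 1 := by rw [hb'val, hwb]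
  have hdvd' := dvd_transfer F hF hmd a b u v w hdvd
  have hij : i ≠ j := Ne.symm hji
  have hchart := (chart_annihilator n d m hn hm1 hmd h2n i j hij).choose_spec.2 F hF
    a' b' ha'i hb'i hb'j hdvd'
  apply heval
  rw [map_prod]
  apply Finset.prod_eq_zero (Finset.mem_univ (i, j))
  rw [hPc]
  dsimp only
  rw [dif_pos hij]
  exact hchart
end

section
/- Let K be a field of characteristic ≠ 3, n ≥ 2, and F ∈ K[x₀,…,xₙ] a cubic form such that the coefficient a₃ of x₁³ is zero, F(1,0,…,0) = 0, the coefficient of x₀²x₁ and of x₀x₁² are zero, and there exist α, β ∈ K with a_{2,j} = α·a_{0,j} + β·a_{1,j} and a_{1,j} = β·a_{0,j} for all 2 ≤ j ≤ n, where a_{k,j} is the coefficient of x₀^{2-k} x₁^k x_j in F. If s ∈ K̄ satisfies s² + βs + (α + β²) = 0, then F(s,1,0,…,0) = 0 and ∂F/∂x_j(s,1,0,…,0) = 0 for all 0 ≤ j ≤ n; in particular the cubic hypersurface {F=0} has a singular point over K̄. -/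
open MvPolynomial



lemma stmt7_sum_pair {σ : Type*} [DecidableEq σ] {a b : σ} (hab : a ≠ b) (d : σ →₀ ℕ)
    (hd : ∀ i ∈ d.support, i = a ∨ i = b) : d.degree = d a + d b := by
  have hsub : d.support ⊆ {a, b} := by
    intro i hi; rcases hd i hi with h | h <;> simp [h]
  rw [Finsupp.degree_apply,
    Finset.sum_subset hsub (fun i _ hi => Finsupp.notMem_support_iff.mp hi),
    Finset.sum_pair hab]

lemma stmt7_ext2 {σ : Type*} [DecidableEq σ] {a b : σ} (hab : a ≠ b) (d : σ →₀ ℕ)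
    (hd : ∀ i ∈ d.support, i = a ∨ i = b) :
    d = Finsupp.single a (d a) + Finsupp.single b (d b) := by
  ext i
  by_cases hia : i = a
  · subst hia; simp [Finsupp.single_apply, hab, Ne.symm hab]
  by_cases hib : i = b
  · subst hib; simp [Finsupp.single_apply, hab, hia]
  · have : i ∉ d.support := fun h => by rcases hd i h with h' | h' <;> tauto
    simp [Finsupp.notMem_support_iff.mp this, Finsupp.single_apply, Ne.symm hia, Ne.symm hib]

lemma stmt7_cases2 {σ : Type*} [DecidableEq σ] {a b : σ} (hab : a ≠ b) (d : σ →₀ ℕ)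
    (hd : ∀ i ∈ d.support, i = a ∨ i = b) (hdeg : d.degree = 3) :
    d = Finsupp.single a 3 ∨ d = Finsupp.single a 2 + Finsupp.single b 1 ∨
    d = Finsupp.single a 1 + Finsupp.single b 2 ∨ d = Finsupp.single b 3 := by
  have h2 := stmt7_ext2 hab d hd
  rw [stmt7_sum_pair hab d hd] at hdeg
  have : d a = 0 ∧ d b = 3 ∨ d a = 1 ∧ d b = 2 ∨ d a = 2 ∧ d b = 1 ∨ d a = 3 ∧ d b = 0 := by
    omega
  rcases this with ⟨h1, h2'⟩ | ⟨h1, h2'⟩ | ⟨h1, h2'⟩ | ⟨h1, h2'⟩ <;>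
    rw [h1, h2'] at h2 <;> simp [h2]

lemma stmt7_ext3 {σ : Type*} [DecidableEq σ] {a b c : σ} (hab : a ≠ b) (hac : a ≠ c)
    (hbc : b ≠ c) (d : σ →₀ ℕ) (hd : ∀ i ∈ d.support, i = a ∨ i = b ∨ i = c) :
    d = Finsupp.single a (d a) + Finsupp.single b (d b) + Finsupp.single c (d c) := by
  ext i
  by_cases hia : i = a
  · subst hia; simp [Finsupp.single_apply, hab, Ne.symm hab, hac, Ne.symm hac]
  by_cases hib : i = b
  · subst hib; simp [Finsupp.single_apply, hab, hbc, Ne.symm hbc, hia]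
  by_cases hic : i = c
  · subst hic; simp [Finsupp.single_apply, hac, hbc, hia, hib]
  · have : i ∉ d.support := fun h => by rcases hd i h with h' | h' | h' <;> tauto
    simp [Finsupp.notMem_support_iff.mp this, Finsupp.single_apply,
      Ne.symm hia, Ne.symm hib, Ne.symm hic]

lemma stmt7_deg3 {σ : Type*} [DecidableEq σ] {a b c : σ} (hab : a ≠ b) (hac : a ≠ c)
    (hbc : b ≠ c) (d : σ →₀ ℕ) (hd : ∀ i ∈ d.support, i = a ∨ i = b ∨ i = c) :
    d.degree = d a + d b + d c := by
  have hsub : d.support ⊆ {a, b, c} := by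
    intro i hi; rcases hd i hi with h | h | h <;> simp [h]
  rw [Finsupp.degree_apply,
    Finset.sum_subset hsub (fun i _ hi => Finsupp.notMem_support_iff.mp hi)]
  rw [Finset.sum_insert (by simp [hab, hac]), Finset.sum_pair hbc, add_assoc]

lemma stmt7_cases3 {σ : Type*} [DecidableEq σ] {a b c : σ} (hab : a ≠ b) (hac : a ≠ c)
    (hbc : b ≠ c) (d : σ →₀ ℕ) (hd : ∀ i ∈ d.support, i = a ∨ i = b ∨ i = c)
    (hdc : d c = 1) (hdeg : d.degree = 3) :
    d = Finsupp.single a 2 + Finsupp.single c 1 ∨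
    d = Finsupp.single a 1 + Finsupp.single b 1 + Finsupp.single c 1 ∨
    d = Finsupp.single b 2 + Finsupp.single c 1 := by
  have h2 := stmt7_ext3 hab hac hbc d hd
  rw [stmt7_deg3 hab hac hbc d hd, hdc] at hdeg
  rw [hdc] at h2
  have : d a = 2 ∧ d b = 0 ∨ d a = 1 ∧ d b = 1 ∨ d a = 0 ∧ d b = 2 := by omega
  rcases this with ⟨h1, h2'⟩ | ⟨h1, h2'⟩ | ⟨h1, h2'⟩ <;> rw [h1, h2'] at h2 <;> simp [h2]


/-- Let `K` be a field of characteristic `≠ 3`, `n ≥ 2`, and `F` a cubic form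
in `K[x₀,…,xₙ]` such that: the coefficient `a₃` of `x₁³` vanishes, `F(1,0,…,0) = 0`, the
coefficients of `x₀²x₁` and `x₀x₁²` vanish, and there are `α, β ∈ K` with
`a_{2,j} = α·a_{0,j} + β·a_{1,j}` and `a_{1,j} = β·a_{0,j}` for all `2 ≤ j ≤ n`, where
`a_{k,j}` is the coefficient of `x₀^{2-k}x₁^k x_j`.  If `s ∈ K̄` satisfies
`s² + βs + (α + β²) = 0`, then `F(s,1,0,…,0) = 0` and `∂F/∂x_j(s,1,0,…,0) = 0` for all `j`;
in particular the cubic hypersurface `{F = 0}` has a singular point over `K̄`. -/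
theorem stmt7 {K : Type*} [Field K] (h3 : (3 : K) ≠ 0) (n : ℕ) (hn : 2 ≤ n)
    (F : MvPolynomial (Fin (n + 1)) K) (hF : F.IsHomogeneous 3)
    (ha3 : F.coeff (Finsupp.single 1 3) = 0)
    (h0 : MvPolynomial.eval (fun i : Fin (n + 1) => if i = 0 then (1 : K) else 0) F = 0)
    (ha1 : F.coeff (Finsupp.single 0 2 + Finsupp.single 1 1) = 0)
    (ha2 : F.coeff (Finsupp.single 0 1 + Finsupp.single 1 2) = 0)
    (α β : K)
    (hαβ : ∀ j : Fin (n + 1), 2 ≤ (j : ℕ) →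
      F.coeff (Finsupp.single 1 2 + Finsupp.single j 1) =
          α * F.coeff (Finsupp.single 0 2 + Finsupp.single j 1) +
            β * F.coeff (Finsupp.single 0 1 + Finsupp.single 1 1 + Finsupp.single j 1) ∧
        F.coeff (Finsupp.single 0 1 + Finsupp.single 1 1 + Finsupp.single j 1) =
          β * F.coeff (Finsupp.single 0 2 + Finsupp.single j 1))
    (s : AlgebraicClosure K)
    (hs : s ^ 2 + algebraMap K (AlgebraicClosure K) β * s +
      algebraMap K (AlgebraicClosure K) (α + β ^ 2) = 0) :
    (MvPolynomial.eval
        (fun i : Fin (n + 1) => if i = 0 then s else if i = 1 then 1 else 0)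
        (MvPolynomial.map (algebraMap K (AlgebraicClosure K)) F) = 0 ∧
      ∀ j : Fin (n + 1),
        MvPolynomial.eval
          (fun i : Fin (n + 1) => if i = 0 then s else if i = 1 then 1 else 0)
          (MvPolynomial.pderiv j
            (MvPolynomial.map (algebraMap K (AlgebraicClosure K)) F)) = 0) ∧
    ∃ z : Fin (n + 1) → AlgebraicClosure K, z ≠ 0 ∧
      MvPolynomial.eval z (MvPolynomial.map (algebraMap K (AlgebraicClosure K)) F) = 0 ∧
      ∀ j : Fin (n + 1),
        MvPolynomial.eval z
          (MvPolynomial.pderiv j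
            (MvPolynomial.map (algebraMap K (AlgebraicClosure K)) F)) = 0 := by
  classical
  set φ := algebraMap K (AlgebraicClosure K) with hφ
  set p : Fin (n + 1) → AlgebraicClosure K :=
    fun i => if i = 0 then s else if i = 1 then 1 else 0 with hp
  set G := MvPolynomial.map φ F with hG
  have hv1 : ((1 : Fin (n + 1)) : ℕ) = 1 := by
    rw [Fin.val_one']; exact Nat.mod_eq_of_lt (by omega)
  have h01 : (0 : Fin (n + 1)) ≠ 1 := by
    intro h
    have := congrArg Fin.val h
    rw [Fin.val_zero, hv1] at this
    omega
  -- degrees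
  have hdeg : ∀ d ∈ F.support, d.degree = 3 := by
    intro d hd
    have := hF (MvPolynomial.mem_support_iff.mp hd)
    rwa [Finsupp.degree_eq_weight_one]
  -- the coefficient of x₀³ vanishes
  have ha0 : F.coeff (Finsupp.single 0 3) = 0 := by
    rw [MvPolynomial.eval_eq] at h0
    rw [Finset.sum_eq_single (Finsupp.single (0 : Fin (n + 1)) 3)] at h0
    · simpa [Finsupp.support_single_ne_zero] using h0
    · intro d hd hne
      by_cases hall : ∀ i ∈ d.support, i = (0 : Fin (n + 1))
      · exfalso
        apply hne
        have hext : d = Finsupp.single 0 (d 0) := by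
          ext i
          by_cases hi : i = 0
          · subst hi; simp
          · have : i ∉ d.support := fun h => hi (hall i h)
            simp [Finsupp.notMem_support_iff.mp this, Finsupp.single_apply, Ne.symm hi]
        have hdeg' : d.degree = d 0 := by
          rw [Finsupp.degree_apply,
            Finset.sum_subset (show d.support ⊆ {0} from fun i hi => by simp [hall i hi])
              (fun i _ hi => Finsupp.notMem_support_iff.mp hi), Finset.sum_singleton]
        have h3' : d 0 = 3 := by rw [← hdeg', hdeg d hd]
        rw [hext, h3']
      · push_neg at hall
        obtain ⟨i, hi, hi0⟩ := hall
        rw [Finset.prod_eq_zero hi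
          (by rw [if_neg hi0]; exact zero_pow (Finsupp.mem_support_iff.mp hi)), mul_zero]
    · intro h
      rw [MvPolynomial.notMem_support_iff.mp h, zero_mul]
  -- every monomial of F involves a variable other than x₀, x₁
  have hgood : ∀ d ∈ F.support, ¬(∀ i ∈ d.support, i = 0 ∨ i = 1) := by
    intro d hd hcon
    rcases stmt7_cases2 h01 d hcon (hdeg d hd) with h | h | h | h <;>
      subst h <;> [exact MvPolynomial.mem_support_iff.mp hd ha0;
        exact MvPolynomial.mem_support_iff.mp hd ha1;
        exact MvPolynomial.mem_support_iff.mp hd ha2;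
        exact MvPolynomial.mem_support_iff.mp hd ha3]
  have hGsup : ∀ d ∈ G.support, d ∈ F.support := by
    intro d hd
    rw [MvPolynomial.mem_support_iff] at hd ⊢
    intro h
    exact hd (by rw [hG, MvPolynomial.coeff_map, h, map_zero])
  have hpzero : ∀ i : Fin (n + 1), i ≠ 0 → i ≠ 1 → p i = 0 := by
    intro i hi0 hi1; simp [hp, hi0, hi1]
  -- evaluation of F at p is zero
  have hev : MvPolynomial.eval p G = 0 := by
    rw [MvPolynomial.eval_eq]
    refine Finset.sum_eq_zero fun d hd => ?_
    have h := hgood d (hGsup d hd)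
    push_neg at h
    obtain ⟨i, hi, hi0, hi1⟩ := h
    rw [Finset.prod_eq_zero hi
      (by rw [hpzero i hi0 hi1]; exact zero_pow (Finsupp.mem_support_iff.mp hi)), mul_zero]
  -- partial derivatives as sums
  have hpsum : ∀ j : Fin (n + 1), MvPolynomial.eval p (MvPolynomial.pderiv j G) =
      ∑ d ∈ G.support, G.coeff d * (d j : AlgebraicClosure K) *
        ∏ i ∈ (d - Finsupp.single j 1).support,
          p i ^ ((d - Finsupp.single j 1 : Fin (n + 1) →₀ ℕ) i) := by
    intro j
    conv_lhs => rw [G.as_sum]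
    rw [map_sum, map_sum]
    refine Finset.sum_congr rfl fun d _ => ?_
    rw [MvPolynomial.pderiv_monomial, MvPolynomial.eval_monomial]
    rfl
  have hpd : ∀ j : Fin (n + 1), MvPolynomial.eval p (MvPolynomial.pderiv j G) = 0 := by
    intro j
    rw [hpsum j]
    by_cases hj : 2 ≤ (j : ℕ)
    · -- the interesting case
      have hj0 : j ≠ 0 := by
        intro h; rw [h, Fin.val_zero] at hj; omega
      have hj1 : j ≠ 1 := by
        intro h; rw [h, hv1] at hj; omega
      obtain ⟨hA, hB⟩ := hαβ j hj
      have h0j : (0 : Fin (n + 1)) ≠ j := Ne.symm hj0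
      have h1j : (1 : Fin (n + 1)) ≠ j := Ne.symm hj1
      set D0 : Fin (n + 1) →₀ ℕ := Finsupp.single 0 2 + Finsupp.single j 1 with hD0
      set D1 : Fin (n + 1) →₀ ℕ :=
        Finsupp.single 0 1 + Finsupp.single 1 1 + Finsupp.single j 1 with hD1
      set D2 : Fin (n + 1) →₀ ℕ := Finsupp.single 1 2 + Finsupp.single j 1 with hD2
      set T : (Fin (n + 1) →₀ ℕ) → AlgebraicClosure K := fun d =>
        G.coeff d * (d j : AlgebraicClosure K) *
          ∏ i ∈ (d - Finsupp.single j 1).support,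
            p i ^ ((d - Finsupp.single j 1 : Fin (n + 1) →₀ ℕ) i) with hT
      have hn0 : n ≠ 0 := by omega
      have hD0v : D0 0 = 2 := by simp [hD0, Finsupp.single_apply, hj0]
      have hD1v : D1 0 = 1 := by simp [hD1, Finsupp.single_apply, hj0, Ne.symm h01]
      have hD2v : D2 0 = 0 := by simp [hD2, Finsupp.single_apply, hj0, Ne.symm h01]
      have hne01 : D0 ≠ D1 := fun h => by rw [h, hD1v] at hD0v; omega
      have hne02 : D0 ≠ D2 := fun h => by rw [h, hD2v] at hD0v; omega
      have hne12 : D1 ≠ D2 := fun h => by rw [h, hD2v] at hD1v; omega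
      have hTnot : ∀ d, d ∉ G.support → T d = 0 := fun d hd => by
        simp only [hT, MvPolynomial.notMem_support_iff.mp hd, zero_mul]
      have hTzero : ∀ d ∈ G.support, d ∉ ({D0, D1, D2} : Finset _) → T d = 0 := by
        intro d hd hdS
        have hdF := hGsup d hd
        by_cases hdj : d j = 0
        · simp [hT, hdj]
        by_cases hall : ∀ i ∈ (d - Finsupp.single j 1 : Fin (n + 1) →₀ ℕ).support,
            i = 0 ∨ i = 1
        · exfalso
          have hej : (d - Finsupp.single j 1 : Fin (n + 1) →₀ ℕ) j = 0 := by
            by_contra hje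
            rcases hall j (Finsupp.mem_support_iff.mpr hje) with h' | h'
            · exact hj0 h'
            · exact hj1 h'
          rw [Finsupp.tsub_apply, Finsupp.single_eq_same] at hej
          have hdj1 : d j = 1 := by omega
          have hsupd : ∀ i ∈ d.support, i = 0 ∨ i = 1 ∨ i = j := by
            intro i hi
            by_cases hij : i = j
            · right; right; exact hij
            · have hei : (d - Finsupp.single j 1 : Fin (n + 1) →₀ ℕ) i = d i := by
                rw [Finsupp.tsub_apply, Finsupp.single_apply, if_neg (Ne.symm hij),
                  Nat.sub_zero]
              rcases hall i (by
                rw [Finsupp.mem_support_iff, hei]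
                exact Finsupp.mem_support_iff.mp hi) with h' | h'
              · exact Or.inl h'
              · exact Or.inr (Or.inl h')
          rcases stmt7_cases3 h01 (Ne.symm hj0) (Ne.symm hj1) d hsupd hdj1
              (hdeg d hdF) with h' | h' | h' <;>
            exact hdS (by simp [h', hD0, hD1, hD2])
        · push_neg at hall
          obtain ⟨i, hi, hi0, hi1⟩ := hall
          simp only [hT]
          rw [Finset.prod_eq_zero hi
            (by rw [hpzero i hi0 hi1]; exact zero_pow (Finsupp.mem_support_iff.mp hi)),
            mul_zero]
      have hmain : ∑ d ∈ G.support, T d = 0 := by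
        have hsum1 : ∑ d ∈ G.support, T d = ∑ d ∈ G.support ∪ {D0, D1, D2}, T d :=
          Finset.sum_subset Finset.subset_union_left (fun d _ hd => hTnot d hd)
        have hsum2 : ∑ d ∈ ({D0, D1, D2} : Finset _), T d =
            ∑ d ∈ G.support ∪ {D0, D1, D2}, T d :=
          Finset.sum_subset Finset.subset_union_right (fun d hd hdS =>
            hTzero d ((Finset.mem_union.mp hd).resolve_right hdS) hdS)
        rw [hsum1, ← hsum2]
        rw [show ({D0, D1, D2} : Finset _) = insert D0 {D1, D2} from rfl,
          Finset.sum_insert (by simp [hne01, hne02]), Finset.sum_pair hne12]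
        -- compute the three terms
        have hp0 : p 0 = s := by simp [hp]
        have hp1 : p 1 = 1 := by simp [hp, Ne.symm h01]
        have hT0 : T D0 = φ (F.coeff (Finsupp.single 0 2 + Finsupp.single j 1)) * s ^ 2 := by
          simp only [hT]
          rw [show (D0 - Finsupp.single j 1 : Fin (n + 1) →₀ ℕ) = Finsupp.single 0 2 from
            hD0 ▸ add_tsub_cancel_right _ _]
          rw [show D0 j = 1 from by simp [hD0, Finsupp.single_apply, h0j]]
          rw [hG, MvPolynomial.coeff_map, ← hD0,
            Finsupp.support_single_ne_zero _ (by norm_num : (2 : ℕ) ≠ 0),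
            Finset.prod_singleton, Finsupp.single_eq_same, hp0, Nat.cast_one, mul_one, hD0]
        have hT1 : T D1 = φ (F.coeff
            (Finsupp.single 0 1 + Finsupp.single 1 1 + Finsupp.single j 1)) * s := by
          simp only [hT]
          rw [show (D1 - Finsupp.single j 1 : Fin (n + 1) →₀ ℕ) =
              Finsupp.single 0 1 + Finsupp.single 1 1 from hD1 ▸ add_tsub_cancel_right _ _]
          rw [show D1 j = 1 from by simp [hD1, Finsupp.single_apply, h0j, h1j]]
          rw [hG, MvPolynomial.coeff_map, ← hD1]
          rw [Finsupp.support_add_eq (by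
            rw [Finsupp.support_single_ne_zero _ (by norm_num : (1 : ℕ) ≠ 0),
              Finsupp.support_single_ne_zero _ (by norm_num : (1 : ℕ) ≠ 0)]
            simp [h01, hn0])]
          rw [Finsupp.support_single_ne_zero _ (by norm_num : (1 : ℕ) ≠ 0),
            Finsupp.support_single_ne_zero _ (by norm_num : (1 : ℕ) ≠ 0)]
          rw [show ({0} ∪ {1} : Finset (Fin (n + 1))) = {0, 1} from rfl,
            Finset.prod_pair h01]
          simp [Finsupp.single_apply, h01, Ne.symm h01, hp0, hp1, hD1, hn0]
        have hT2 : T D2 = φ (F.coeff (Finsupp.single 1 2 + Finsupp.single j 1)) := by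
          simp only [hT]
          rw [show (D2 - Finsupp.single j 1 : Fin (n + 1) →₀ ℕ) = Finsupp.single 1 2 from
            hD2 ▸ add_tsub_cancel_right _ _]
          rw [show D2 j = 1 from by simp [hD2, Finsupp.single_apply, h1j]]
          rw [hG, MvPolynomial.coeff_map, ← hD2,
            Finsupp.support_single_ne_zero _ (by norm_num : (2 : ℕ) ≠ 0),
            Finset.prod_singleton, Finsupp.single_eq_same, hp1, Nat.cast_one, mul_one,
            one_pow, mul_one, hD2]
        rw [hT0, hT1, hT2, hA, hB]
        have hs' : s ^ 2 + φ β * s + (φ α + φ β ^ 2) = 0 := by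
          rw [← map_pow, ← map_add]; exact hs
        simp only [map_add, map_mul]
        linear_combination φ (F.coeff (Finsupp.single 0 2 + Finsupp.single j 1)) * hs'
      exact hmain
    · -- j = 0 or j = 1
      have hj' : j = 0 ∨ j = 1 := by
        rcases (by omega : (j : ℕ) = 0 ∨ (j : ℕ) = 1) with h | h
        · left; exact Fin.ext (by rw [h, Fin.val_zero])
        · right; exact Fin.ext (by rw [h, hv1])
      refine Finset.sum_eq_zero fun d hd => ?_
      have h := hgood d (hGsup d hd)
      push_neg at h
      obtain ⟨i, hi, hi0, hi1⟩ := h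
      have hij : i ≠ j := by rcases hj' with h | h <;> rw [h] <;> assumption
      have hmem : i ∈ (d - Finsupp.single j 1).support := by
        rw [Finsupp.mem_support_iff, Finsupp.tsub_apply, Finsupp.single_apply,
          if_neg (Ne.symm hij)]
        simpa using Finsupp.mem_support_iff.mp hi
      rw [Finset.prod_eq_zero hmem
        (by rw [hpzero i hi0 hi1]; exact zero_pow (Finsupp.mem_support_iff.mp hmem)), mul_zero]
  refine ⟨⟨hev, hpd⟩, p, ?_, hev, hpd⟩
  intro h
  have := congrFun h 1
  simp [hp, Ne.symm h01] at this
end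

section
/- Let K be a field and F ∈ K[x₀,…,xₙ] homogeneous of degree d with expansion F(1, t+ξ₁, ζ₂t+ξ₂, …, ζₙt+ξₙ) = Σ_k f_k(ξ,ζ) t^k. Then the Jacobian matrix of (f₀,…,f_{m-1}) with respect to (ξ₁,…,ξₙ,ζ₂,…,ζₙ) evaluated at (ξ,ζ) = 0 equals the m × (2n-1) matrix whose entry in row k (0 ≤ k ≤ m-1) and the ξ₁-column is (k+1)·a_{k+1}, in the ξ_j-column (2 ≤ j ≤ n) is a_{k,j}, and in the ζ_j-column (2 ≤ j ≤ n) is a_{k-1,j} (with a_{-1,j} = 0), where a_k is the coefficient of x₀^{d-k}x₁^k in F and a_{k,j} is the coefficient of x₀^{d-k-1}x₁^k x_j in F. -/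
open MvPolynomial

open Polynomial
section Infra

variable {K : Type*} [CommRing K] {σ : Type*}

/-- Coefficientwise partial derivative on `Polynomial (MvPolynomial σ K)`. -/
noncomputable def Dm (v : σ) (p : Polynomial (MvPolynomial σ K)) :
    Polynomial (MvPolynomial σ K) :=
  ⟨⟨p.toFinsupp.coeff.mapRange (pderiv v) (map_zero _)⟩⟩

lemma Dm_coeff (v : σ) (p : Polynomial (MvPolynomial σ K)) (k : ℕ) :
    (Dm v p).coeff k = pderiv v (p.coeff k) := rfl

lemma Dm_add (v : σ) (p q : Polynomial (MvPolynomial σ K)) :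
    Dm v (p + q) = Dm v p + Dm v q := by
  ext k; simp [Dm_coeff]

lemma Dm_mul (v : σ) (p q : Polynomial (MvPolynomial σ K)) :
    Dm v (p * q) = Dm v p * q + p * Dm v q := by
  ext k : 1
  simp only [Dm_coeff, Polynomial.coeff_add, Polynomial.coeff_mul]
  rw [show (pderiv v) (∑ x ∈ Finset.HasAntidiagonal.antidiagonal k, p.coeff x.1 * q.coeff x.2)
        = ∑ x ∈ Finset.HasAntidiagonal.antidiagonal k, pderiv v (p.coeff x.1 * q.coeff x.2) from
      map_sum ((pderiv v).toLinearMap) _ _, ← Finset.sum_add_distrib]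
  refine Finset.sum_congr rfl fun x _ => ?_
  rw [pderiv_mul]

lemma Dm_C (v : σ) (a : MvPolynomial σ K) :
    Dm v (Polynomial.C a) = Polynomial.C (pderiv v a) := by
  ext k
  rcases k with _ | k <;> simp [Dm_coeff, Polynomial.coeff_C]

lemma Dm_one (v : σ) : Dm v (1 : Polynomial (MvPolynomial σ K)) = 0 := by
  have := Dm_C v (1 : MvPolynomial σ K); simpa using this

lemma Dm_X (v : σ) : Dm v (Polynomial.X : Polynomial (MvPolynomial σ K)) = 0 := by
  ext k; simp only [Dm_coeff, Polynomial.coeff_X, Polynomial.coeff_zero]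
  split <;> simp

lemma Dm_aeval {τ : Type*} [Fintype τ] (v : σ)
    (φ : τ → Polynomial (MvPolynomial σ K)) (F : MvPolynomial τ K) :
    Dm v (aeval φ F) = ∑ i : τ, aeval φ (pderiv i F) * Dm v (φ i) := by
  classical
  induction F using MvPolynomial.induction_on with
  | C a =>
      have : (aeval φ (C a : MvPolynomial τ K)) = Polynomial.C (MvPolynomial.C a) := by
        simp [algebraMap_eq]
      simp [this, Dm_C, pderiv_C]
  | add p q hp hq =>
      simp only [map_add, Dm_add, hp, hq, add_mul, Finset.sum_add_distrib]
  | mul_X p i hp =>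
      have step : ∀ j : τ, aeval φ (pderiv j (p * X i)) * Dm v (φ j)
          = aeval φ (pderiv j p) * Dm v (φ j) * φ i
            + (if j = i then aeval φ p * Dm v (φ i) else 0) := by
        intro j
        rw [pderiv_mul, pderiv_X, map_add, map_mul, map_mul, MvPolynomial.aeval_X]
        by_cases h : j = i
        · subst h; simp only [Pi.single_eq_same, map_one, mul_one, if_true]; ring
        · simp only [Pi.single_eq_of_ne (Ne.symm h), if_neg h, map_zero, mul_zero, add_zero,
            zero_mul]
          ring
      rw [map_mul, MvPolynomial.aeval_X, Dm_mul, hp, Finset.sum_congr rfl (fun j _ => step j),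
        Finset.sum_add_distrib, Finset.sum_ite_eq' Finset.univ i
          (fun _ => aeval φ p * Dm v (φ i)), if_pos (Finset.mem_univ i), ← Finset.sum_mul]

lemma coeff_pderiv' [DecidableEq σ] (v : σ) (G : MvPolynomial σ K) (μ : σ →₀ ℕ) :
    coeff μ (pderiv v G) = (μ v + 1 : ℕ) * coeff (μ + Finsupp.single v 1) G := by
  induction G using MvPolynomial.induction_on' with
  | add p q hp hq => simp [hp, hq, mul_add]
  | monomial s a =>
      rw [pderiv_monomial, MvPolynomial.coeff_monomial, MvPolynomial.coeff_monomial]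
      by_cases h : s = μ + Finsupp.single v 1
      · subst h
        rw [if_pos (add_tsub_cancel_right _ _), if_pos rfl]
        simp only [Finsupp.add_apply, Finsupp.single_eq_same]
        push_cast; ring
      · rw [if_neg h, mul_zero]
        by_cases h2 : s - Finsupp.single v 1 = μ
        · rw [if_pos h2]
          have hs : s v = 0 := by
            by_contra hs
            apply h
            have hμ : ∀ j, μ j = s j - (Finsupp.single v 1) j := fun j => by
              rw [← h2, Finsupp.tsub_apply]
            ext j
            rw [Finsupp.add_apply, hμ j]
            by_cases hj : j = v
            · subst hj; simp only [Finsupp.single_eq_same]; omega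
            · simp [Finsupp.single_apply, Ne.symm hj, hj]
          simp [hs]
        · rw [if_neg h2]

lemma degree_single' (a : σ) (m : ℕ) : (Finsupp.single a m).degree = m := by
  classical
  by_cases h : m = 0
  · subst h; simp [Finsupp.degree]
  · exact Finsupp.degree_single a m

lemma degree_add' (f g : σ →₀ ℕ) : (f + g).degree = f.degree + g.degree := by
  classical
  show (f + g).sum (fun _ n => n) = f.sum (fun _ n => n) + g.sum (fun _ n => n)
  rw [Finsupp.sum_add_index' (fun _ => rfl) (fun _ _ _ => rfl)]

lemma isHomogeneous_pderiv' [DecidableEq σ] {G : MvPolynomial σ K} {e : ℕ}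
    (hG : G.IsHomogeneous e) (v : σ) : (pderiv v G).IsHomogeneous (e - 1) := by
  intro μ hμ
  rw [coeff_pderiv'] at hμ
  have h2 : coeff (μ + Finsupp.single v 1) G ≠ 0 := fun h => hμ (by rw [h, mul_zero])
  have h3 : (μ + Finsupp.single v 1).degree = e := by
    rw [Finsupp.degree_eq_weight_one]; exact hG h2
  rw [degree_add', degree_single'] at h3
  show (Finsupp.weight (fun _ => 1)) μ = e - 1
  rw [← Finsupp.degree_eq_weight_one]
  omega

lemma lemC {K : Type*} [CommRing K] {n : ℕ} (hn : 1 ≤ n) {e : ℕ} (k : ℕ)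
    (G : MvPolynomial (Fin (n + 1)) K) (hG : G.IsHomogeneous e)
    (ψ : Fin (n + 1) → Polynomial K)
    (hψ0 : ψ 0 = 1) (hψ1 : ψ 1 = Polynomial.X)
    (hψ2 : ∀ i : Fin (n + 1), 2 ≤ (i : ℕ) → ψ i = 0) :
    (eval₂ Polynomial.C ψ G).coeff k
      = G.coeff (Finsupp.single 0 (e - k) + Finsupp.single 1 k) := by
  classical
  have hv1 : ((1 : Fin (n + 1)) : ℕ) = 1 := by
    rw [Fin.val_one']; exact Nat.mod_eq_of_lt (by omega)
  have h01 : (0 : Fin (n + 1)) ≠ 1 := fun h => by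
    have := congrArg Fin.val h
    rw [Fin.val_zero, hv1] at this
    omega
  set μ : Fin (n + 1) →₀ ℕ := Finsupp.single 0 (e - k) + Finsupp.single 1 k with hμdef
  have hμ1 : μ 1 = k := by
    rw [hμdef, Finsupp.add_apply, Finsupp.single_eq_of_ne' h01, Finsupp.single_eq_same, zero_add]
  have hμ2 : ∀ i : Fin (n + 1), 2 ≤ (i : ℕ) → μ i = 0 := by
    intro i hi
    have hi0 : (0 : Fin (n + 1)) ≠ i := fun h => by
      have := congrArg Fin.val h; rw [Fin.val_zero] at this; omega
    have hi1 : (1 : Fin (n + 1)) ≠ i := fun h => by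
      have := congrArg Fin.val h; rw [hv1] at this; omega
    rw [hμdef, Finsupp.add_apply, Finsupp.single_eq_of_ne' hi0, Finsupp.single_eq_of_ne' hi1,
      add_zero]
  rw [eval₂_eq', Polynomial.finset_sum_coeff]
  have key : ∀ d ∈ G.support, (Polynomial.C (G.coeff d) * ∏ i, ψ i ^ d i).coeff k
      = if d = μ then G.coeff μ else 0 := by
    intro d hd
    by_cases hz : ∀ i : Fin (n + 1), 2 ≤ (i : ℕ) → d i = 0
    · have hprod : (∏ i, ψ i ^ d i) = ψ 1 ^ d 1 := by
        refine Finset.prod_eq_single 1 (fun b _ hb => ?_) (fun h => absurd (Finset.mem_univ _) h)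
        rcases Nat.lt_or_ge (b : ℕ) 2 with hb2 | hb2
        · have hbv : (b : ℕ) = 0 := by
            have hb1 : (b : ℕ) ≠ 1 := fun hc => hb (Fin.ext (by rw [hv1]; exact hc))
            omega
          have hb0 : b = 0 := Fin.ext (by rw [hbv, Fin.val_zero])
          rw [hb0, hψ0, one_pow]
        · rw [hz b hb2, pow_zero]
      rw [hprod, hψ1, Polynomial.coeff_C_mul, Polynomial.coeff_X_pow]
      by_cases hk : d 1 = k
      · rw [if_pos hk.symm, mul_one]
        have hdeg : d.degree = e := by
          by_contra hne
          exact (mem_support_iff.mp hd) (hG.coeff_eq_zero hne)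
        have hd' : d = Finsupp.single 0 (d 0) + Finsupp.single 1 k := by
          ext j
          rcases Nat.lt_or_ge (j : ℕ) 2 with hj2 | hj2
          · by_cases hj0 : (j : ℕ) = 0
            · have hj : j = 0 := Fin.ext (by rw [hj0, Fin.val_zero])
              rw [hj, Finsupp.add_apply, Finsupp.single_eq_same,
                Finsupp.single_eq_of_ne' (Ne.symm h01), add_zero]
            · have hj1 : (j : ℕ) = 1 := by omega
              have hj : j = 1 := Fin.ext (by rw [hj1, hv1])
              rw [hj, Finsupp.add_apply, Finsupp.single_eq_of_ne' h01,
                Finsupp.single_eq_same, zero_add, hk]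
          · have hj0 : (0 : Fin (n + 1)) ≠ j := fun h => by
              have := congrArg Fin.val h; rw [Fin.val_zero] at this; omega
            have hj1 : (1 : Fin (n + 1)) ≠ j := fun h => by
              have := congrArg Fin.val h; rw [hv1] at this; omega
            rw [hz j hj2, Finsupp.add_apply, Finsupp.single_eq_of_ne' hj0,
              Finsupp.single_eq_of_ne' hj1, add_zero]
        have hdeg2 : d 0 + k = e := by
          rw [hd', degree_add', degree_single', degree_single'] at hdeg
          exact hdeg
        have hdμ : d = μ := by
          rw [hd', hμdef]
          have h0k : d 0 = e - k := by omega
          rw [h0k]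
        rw [if_pos hdμ, hdμ]
      · rw [if_neg (fun h => hk h.symm), mul_zero]
        rw [if_neg (fun h => hk (by rw [h, hμ1]))]
    · push_neg at hz
      obtain ⟨i, hi2, hi0⟩ := hz
      have hprod : (∏ i, ψ i ^ d i) = 0 :=
        Finset.prod_eq_zero (Finset.mem_univ i) (by rw [hψ2 i hi2, zero_pow hi0])
      rw [hprod, mul_zero, Polynomial.coeff_zero]
      rw [if_neg (fun h => hi0 (by rw [h]; exact hμ2 i hi2))]
  rw [Finset.sum_congr rfl key, Finset.sum_ite_eq' G.support μ (fun _ => G.coeff μ)]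
  split
  · rfl
  · next h => exact (notMem_support_iff.mp h).symm

end Infra

/-- The expansion of `F(1, t+ξ₁, ζ₂t+ξ₂, …, ζₙt+ξₙ) = Σ_k f_k(ξ,ζ) t^k` as a polynomial in `t`
with coefficients `f_k` in the polynomial ring `K[ξ₁,…,ξₙ,ζ₂,…,ζₙ]`; the `ξ` variables are
indexed by `Sum.inl (j-1)`, `j = 1,…,n`, and the `ζ` variables by `Sum.inr (j-2)`,
`j = 2,…,n`. -/
noncomputable def lineExpansion {K : Type*} [Field K] (n : ℕ)
    (F : MvPolynomial (Fin (n + 1)) K) :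
    Polynomial (MvPolynomial (Fin n ⊕ Fin (n - 1)) K) :=
  MvPolynomial.aeval
    (fun i : Fin (n + 1) =>
      if h0 : (i : ℕ) = 0 then 1
      else if h1 : (i : ℕ) = 1 then
        Polynomial.X +
          Polynomial.C (MvPolynomial.X (Sum.inl ⟨0, by have := i.isLt; omega⟩))
      else
        Polynomial.C (MvPolynomial.X (Sum.inr ⟨(i : ℕ) - 2, by have := i.isLt; omega⟩)) *
            Polynomial.X +
          Polynomial.C (MvPolynomial.X (Sum.inl ⟨(i : ℕ) - 1, by have := i.isLt; omega⟩))) F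

set_option maxHeartbeats 1000000 in
/-- Let `F ∈ K[x₀,…,xₙ]` be homogeneous of degree `d` with expansion
`F(1, t+ξ₁, ζ₂t+ξ₂, …, ζₙt+ξₙ) = Σ_k f_k(ξ,ζ) t^k`.  The Jacobian matrix of
`(f₀,…,f_{m-1})` in the variables `(ξ₁,…,ξₙ,ζ₂,…,ζₙ)` evaluated at `(ξ,ζ) = 0` is the
`m × (2n-1)` matrix whose entry in row `k` and the `ξ₁`-column is `(k+1)·a_{k+1}`, in the
`ξ_j`-column (`2 ≤ j ≤ n`) is `a_{k,j}`, and in the `ζ_j`-column (`2 ≤ j ≤ n`) is `a_{k-1,j}`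
(with `a_{-1,j} = 0`), where `a_k` is the coefficient of `x₀^{d-k}x₁^k` and `a_{k,j}` that of
`x₀^{d-k-1}x₁^k x_j` in `F`. -/
theorem stmt9 {K : Type*} [Field K] (n d m : ℕ) (hn : 1 ≤ n) (hm : 1 ≤ m) (hmd : m ≤ d)
    (F : MvPolynomial (Fin (n + 1)) K) (hF : F.IsHomogeneous d) :
    ∀ k < m,
      (MvPolynomial.eval (0 : Fin n ⊕ Fin (n - 1) → K)
          (MvPolynomial.pderiv (Sum.inl ⟨0, by omega⟩) ((lineExpansion n F).coeff k)) =
        ((k + 1 : ℕ) : K) *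
          F.coeff (Finsupp.single 0 (d - (k + 1)) + Finsupp.single 1 (k + 1))) ∧
      (∀ j : Fin n, 1 ≤ (j : ℕ) →
        MvPolynomial.eval (0 : Fin n ⊕ Fin (n - 1) → K)
            (MvPolynomial.pderiv (Sum.inl j) ((lineExpansion n F).coeff k)) =
          F.coeff (Finsupp.single 0 (d - k - 1) + Finsupp.single 1 k +
            Finsupp.single ⟨(j : ℕ) + 1, by have := j.isLt; omega⟩ 1)) ∧
      (∀ j : Fin (n - 1),
        MvPolynomial.eval (0 : Fin n ⊕ Fin (n - 1) → K)
            (MvPolynomial.pderiv (Sum.inr j) ((lineExpansion n F).coeff k)) =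
          if k = 0 then 0
          else
            F.coeff (Finsupp.single 0 (d - k) + Finsupp.single 1 (k - 1) +
              Finsupp.single ⟨(j : ℕ) + 2, by have := j.isLt; omega⟩ 1)) := by
  classical
  intro k hk
  have hd1 : 1 ≤ d := le_trans hm hmd
  have hkd : k + 1 ≤ d := by omega
  set σ' := (Fin n ⊕ Fin (n - 1)) with hσ'
  set φf : Fin (n + 1) → Polynomial (MvPolynomial σ' K) :=
    (fun i : Fin (n + 1) =>
      if h0 : (i : ℕ) = 0 then 1
      else if h1 : (i : ℕ) = 1 then
        Polynomial.X +
          Polynomial.C (MvPolynomial.X (Sum.inl ⟨0, by have := i.isLt; omega⟩))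
      else
        Polynomial.C (MvPolynomial.X (Sum.inr ⟨(i : ℕ) - 2, by have := i.isLt; omega⟩)) *
            Polynomial.X +
          Polynomial.C (MvPolynomial.X (Sum.inl ⟨(i : ℕ) - 1, by have := i.isLt; omega⟩)))
    with hφf
  have hLE : lineExpansion n F = aeval φf F := rfl
  -- values of φf
  have hφ0 : ∀ i : Fin (n + 1), (i : ℕ) = 0 → φf i = 1 := by
    intro i h; rw [hφf]; exact dif_pos h
  have hφ1 : ∀ i : Fin (n + 1), (i : ℕ) = 1 →
      φf i = Polynomial.X + Polynomial.C (MvPolynomial.X (Sum.inl (⟨0, by omega⟩ : Fin n))) := by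
    intro i h; rw [hφf]
    simp only
    rw [dif_neg (by omega), dif_pos h]
  have hφ2 : ∀ i : Fin (n + 1), ∀ h2 : 2 ≤ (i : ℕ),
      φf i = Polynomial.C (MvPolynomial.X
          (Sum.inr (⟨(i : ℕ) - 2, by have := i.isLt; omega⟩ : Fin (n - 1)))) * Polynomial.X +
        Polynomial.C (MvPolynomial.X
          (Sum.inl (⟨(i : ℕ) - 1, by have := i.isLt; omega⟩ : Fin n))) := by
    intro i h; rw [hφf]
    simp only
    rw [dif_neg (by omega), dif_neg (by omega)]
  -- the substituted values at ξ = ζ = 0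
  have hΨ0 : Polynomial.map (MvPolynomial.eval (0 : σ' → K)) (φf 0) = 1 := by
    rw [hφ0 0 (Fin.val_zero _), Polynomial.map_one]
  have hΨ1 : Polynomial.map (MvPolynomial.eval (0 : σ' → K)) (φf 1) = Polynomial.X := by
    have hv1 : ((1 : Fin (n + 1)) : ℕ) = 1 := by
      rw [Fin.val_one']; exact Nat.mod_eq_of_lt (by omega)
    rw [hφ1 1 hv1]
    simp [Polynomial.map_add, Polynomial.map_C]
  have hΨ2 : ∀ i : Fin (n + 1), 2 ≤ (i : ℕ) →
      Polynomial.map (MvPolynomial.eval (0 : σ' → K)) (φf i) = 0 := by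
    intro i h
    rw [hφ2 i h]
    simp [Polynomial.map_add, Polynomial.map_mul, Polynomial.map_C]
  -- composite substitution
  have hcomp : ∀ G : MvPolynomial (Fin (n + 1)) K,
      Polynomial.map (MvPolynomial.eval (0 : σ' → K)) (aeval φf G)
        = eval₂ Polynomial.C (fun i => Polynomial.map (MvPolynomial.eval (0 : σ' → K)) (φf i))
            G := by
    intro G
    have h1 : (Polynomial.mapRingHom (MvPolynomial.eval (0 : σ' → K))).comp
        (algebraMap K (Polynomial (MvPolynomial σ' K))) = (Polynomial.C : K →+* Polynomial K) := by
      ext a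
      simp
    have h2 : (⇑(Polynomial.mapRingHom (MvPolynomial.eval (0 : σ' → K)))) ∘ φf
        = fun i => Polynomial.map (MvPolynomial.eval (0 : σ' → K)) (φf i) := by
      funext i
      simp [Polynomial.coe_mapRingHom]
    rw [MvPolynomial.aeval_def, ← Polynomial.coe_mapRingHom, eval₂_comp_left, h1, h2]
    rfl
  -- chain rule, mapped to K
  have hsum : ∀ v : σ',
      MvPolynomial.eval (0 : σ' → K) (pderiv v ((lineExpansion n F).coeff k))
        = (∑ i : Fin (n + 1),
            eval₂ Polynomial.C
              (fun i => Polynomial.map (MvPolynomial.eval (0 : σ' → K)) (φf i)) (pderiv i F) *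
            Polynomial.map (MvPolynomial.eval (0 : σ' → K)) (Dm v (φf i))).coeff k := by
    intro v
    rw [← Dm_coeff, ← Polynomial.coeff_map, hLE, Dm_aeval,
      show Polynomial.map (MvPolynomial.eval (0 : σ' → K))
          (∑ i : Fin (n + 1), aeval φf (pderiv i F) * Dm v (φf i))
        = ∑ i : Fin (n + 1),
            Polynomial.map (MvPolynomial.eval (0 : σ' → K))
              (aeval φf (pderiv i F) * Dm v (φf i)) from
        map_sum (Polynomial.mapRingHom _) _ _]
    refine congrArg (fun p => Polynomial.coeff p k) (Finset.sum_congr rfl fun i _ => ?_)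
    rw [Polynomial.map_mul, hcomp]
  have hhom : ∀ i : Fin (n + 1), (pderiv i F).IsHomogeneous (d - 1) :=
    fun i => isHomogeneous_pderiv' hF i
  have hv1 : ((1 : Fin (n + 1)) : ℕ) = 1 := by
    rw [Fin.val_one']; exact Nat.mod_eq_of_lt (by omega)
  have h01 : (0 : Fin (n + 1)) ≠ 1 := fun h => by
    have := congrArg Fin.val h; rw [Fin.val_zero, hv1] at this; omega
  refine ⟨?_, ?_, ?_⟩
  -- ξ₁ column
  · rw [hsum (Sum.inl (⟨0, by omega⟩ : Fin n)), Finset.sum_eq_single (1 : Fin (n + 1))]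
    · have hD : Polynomial.map (MvPolynomial.eval (0 : σ' → K))
          (Dm (Sum.inl (⟨0, by omega⟩ : Fin n)) (φf 1)) = 1 := by
        rw [hφ1 1 hv1, Dm_add, Dm_X, Dm_C, zero_add, pderiv_X_self, Polynomial.map_C]
        simp
      rw [hD, mul_one,
        lemC hn k (pderiv 1 F) (hhom 1)
          (fun i => Polynomial.map (MvPolynomial.eval (0 : σ' → K)) (φf i)) hΨ0 hΨ1 hΨ2,
        coeff_pderiv']
      have hμ1 : ((Finsupp.single (0 : Fin (n + 1)) (d - 1 - k) + Finsupp.single 1 k : Fin (n + 1) →₀ ℕ)) 1 = k := by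
        rw [Finsupp.add_apply, Finsupp.single_eq_of_ne' h01, Finsupp.single_eq_same, zero_add]
      rw [hμ1]
      have hrw : Finsupp.single (0 : Fin (n + 1)) (d - 1 - k) + Finsupp.single 1 k
          + Finsupp.single 1 1
          = Finsupp.single 0 (d - (k + 1)) + Finsupp.single 1 (k + 1) := by
        rw [add_assoc, ← Finsupp.single_add]
        have h' : d - 1 - k = d - (k + 1) := by omega
        rw [h']
      rw [hrw]
    · intro b _ hb
      have hbv : (b : ℕ) ≠ 1 := fun hc => hb (Fin.ext (by rw [hv1]; exact hc))
      have hD0 : Polynomial.map (MvPolynomial.eval (0 : σ' → K))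
          (Dm (Sum.inl (⟨0, by omega⟩ : Fin n)) (φf b)) = 0 := by
        rcases Nat.lt_or_ge (b : ℕ) 2 with h2 | h2
        · have hb0 : (b : ℕ) = 0 := by omega
          rw [hφ0 b hb0, Dm_one, Polynomial.map_zero]
        · have hne2 : (Sum.inl (⟨(b : ℕ) - 1, by have := b.isLt; omega⟩ : Fin n) : σ')
              ≠ Sum.inl (⟨0, by omega⟩ : Fin n) := by
            intro hc
            have := congrArg Fin.val (Sum.inl.inj hc)
            simp only at this
            omega
          rw [hφ2 b h2]
          simp [Dm_add, Dm_mul, Dm_C, Dm_X, pderiv_X_of_ne hne2]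
      rw [hD0, mul_zero]
    · intro h; exact absurd (Finset.mem_univ _) h
  -- ξⱼ columns, j ≥ 2
  · intro j hj
    have hjlt := j.isLt
    set i₂ : Fin (n + 1) := ⟨(j : ℕ) + 1, by omega⟩ with hi₂
    rw [hsum (Sum.inl j), Finset.sum_eq_single i₂]
    · have h2 : 2 ≤ (i₂ : ℕ) := by
        show 2 ≤ (j : ℕ) + 1
        omega
      have hidx : ∀ pf : (i₂ : ℕ) - 1 < n, (⟨(i₂ : ℕ) - 1, pf⟩ : Fin n) = j :=
        fun pf => Fin.ext (by show (j : ℕ) + 1 - 1 = (j : ℕ); omega)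
      have hD : Polynomial.map (MvPolynomial.eval (0 : σ' → K))
          (Dm (Sum.inl j) (φf i₂)) = 1 := by
        rw [hφ2 i₂ h2, hidx]
        simp [Dm_add, Dm_mul, Dm_C, Dm_X, pderiv_X_of_ne (Sum.inr_ne_inl)]
      rw [hD, mul_one,
        lemC hn k (pderiv i₂ F) (hhom i₂)
          (fun i => Polynomial.map (MvPolynomial.eval (0 : σ' → K)) (φf i)) hΨ0 hΨ1 hΨ2,
        coeff_pderiv']
      have hμ0 : ((Finsupp.single (0 : Fin (n + 1)) (d - 1 - k) + Finsupp.single 1 k : Fin (n + 1) →₀ ℕ)) i₂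
          = 0 := by
        have hne0 : (0 : Fin (n + 1)) ≠ i₂ := fun h => by
          have := congrArg Fin.val h; rw [Fin.val_zero] at this
          exact absurd this.symm (by show (j : ℕ) + 1 ≠ 0; omega)
        have hne1 : (1 : Fin (n + 1)) ≠ i₂ := fun h => by
          have := congrArg Fin.val h; rw [hv1] at this
          exact absurd this.symm (by show (j : ℕ) + 1 ≠ 1; omega)
        rw [Finsupp.add_apply, Finsupp.single_eq_of_ne' hne0, Finsupp.single_eq_of_ne' hne1,
          add_zero]
      rw [hμ0]
      have hrw : Finsupp.single (0 : Fin (n + 1)) (d - 1 - k) + Finsupp.single 1 k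
          + Finsupp.single i₂ 1
          = Finsupp.single 0 (d - k - 1) + Finsupp.single 1 k
              + Finsupp.single ⟨(j : ℕ) + 1, by omega⟩ 1 := by
        have h' : d - 1 - k = d - k - 1 := by omega
        rw [h']
      rw [hrw]
      simp
      rfl
    · intro b _ hb
      have hbv : (b : ℕ) ≠ (j : ℕ) + 1 := fun hc => hb (Fin.ext hc)
      have hD0 : Polynomial.map (MvPolynomial.eval (0 : σ' → K))
          (Dm (Sum.inl j) (φf b)) = 0 := by
        rcases Nat.lt_or_ge (b : ℕ) 2 with h2 | h2
        · by_cases hb0 : (b : ℕ) = 0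
          · rw [hφ0 b hb0, Dm_one, Polynomial.map_zero]
          · have hb1 : (b : ℕ) = 1 := by omega
            have hne : (Sum.inl (⟨0, by omega⟩ : Fin n) : σ') ≠ Sum.inl j := by
              intro hc
              have := congrArg Fin.val (Sum.inl.inj hc)
              simp only at this
              omega
            rw [hφ1 b hb1]
            simp [Dm_add, Dm_X, Dm_C, pderiv_X_of_ne hne]
        · have hne2 : (Sum.inl (⟨(b : ℕ) - 1, by have := b.isLt; omega⟩ : Fin n) : σ')
              ≠ Sum.inl j := by
            intro hc
            have := congrArg Fin.val (Sum.inl.inj hc)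
            simp only at this
            omega
          rw [hφ2 b h2]
          simp [Dm_add, Dm_mul, Dm_C, Dm_X, pderiv_X_of_ne hne2,
            pderiv_X_of_ne (Sum.inr_ne_inl)]
      rw [hD0, mul_zero]
    · intro h; exact absurd (Finset.mem_univ _) h
  -- ζⱼ columns
  · intro j
    have hjlt := j.isLt
    set i₃ : Fin (n + 1) := ⟨(j : ℕ) + 2, by omega⟩ with hi₃
    rw [hsum (Sum.inr j), Finset.sum_eq_single i₃]
    · have h2 : 2 ≤ (i₃ : ℕ) := by
        show 2 ≤ (j : ℕ) + 2
        omega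
      have hidx : ∀ pf : (i₃ : ℕ) - 2 < n - 1, (⟨(i₃ : ℕ) - 2, pf⟩ : Fin (n - 1)) = j :=
        fun pf => Fin.ext (by show (j : ℕ) + 2 - 2 = (j : ℕ); omega)
      have hD : Polynomial.map (MvPolynomial.eval (0 : σ' → K))
          (Dm (Sum.inr j) (φf i₃)) = Polynomial.X := by
        rw [hφ2 i₃ h2, hidx]
        simp [Dm_add, Dm_mul, Dm_C, Dm_X, pderiv_X_of_ne (Sum.inl_ne_inr)]
      rw [hD]
      by_cases hk0 : k = 0
      · subst hk0
        rw [if_pos rfl, Polynomial.mul_coeff_zero, Polynomial.coeff_X_zero, mul_zero]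
      · obtain ⟨k', rfl⟩ := Nat.exists_eq_succ_of_ne_zero hk0
        rw [if_neg hk0, Polynomial.coeff_mul_X,
          lemC hn k' (pderiv i₃ F) (hhom i₃)
            (fun i => Polynomial.map (MvPolynomial.eval (0 : σ' → K)) (φf i)) hΨ0 hΨ1 hΨ2,
          coeff_pderiv']
        have hμ0 : ((Finsupp.single (0 : Fin (n + 1)) (d - 1 - k') + Finsupp.single 1 k' : Fin (n + 1) →₀ ℕ)) i₃
            = 0 := by
          have hne0 : (0 : Fin (n + 1)) ≠ i₃ := fun h => by
            have := congrArg Fin.val h; rw [Fin.val_zero] at this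
            exact absurd this.symm (by show (j : ℕ) + 2 ≠ 0; omega)
          have hne1 : (1 : Fin (n + 1)) ≠ i₃ := fun h => by
            have := congrArg Fin.val h; rw [hv1] at this
            exact absurd this.symm (by show (j : ℕ) + 2 ≠ 1; omega)
          rw [Finsupp.add_apply, Finsupp.single_eq_of_ne' hne0, Finsupp.single_eq_of_ne' hne1,
            add_zero]
        rw [hμ0]
        have hrw : Finsupp.single (0 : Fin (n + 1)) (d - 1 - k') + Finsupp.single 1 k'
            + Finsupp.single i₃ 1
            = Finsupp.single 0 (d - (k' + 1)) + Finsupp.single 1 (k' + 1 - 1)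
                + Finsupp.single ⟨(j : ℕ) + 2, by omega⟩ 1 := by
          have h' : d - 1 - k' = d - (k' + 1) := by omega
          have h'' : k' + 1 - 1 = k' := by omega
          rw [h', h'']
        rw [hrw]
        simp
        rfl
    · intro b _ hb
      have hbv : (b : ℕ) ≠ (j : ℕ) + 2 := fun hc => hb (Fin.ext hc)
      have hD0 : Polynomial.map (MvPolynomial.eval (0 : σ' → K))
          (Dm (Sum.inr j) (φf b)) = 0 := by
        rcases Nat.lt_or_ge (b : ℕ) 2 with h2 | h2
        · by_cases hb0 : (b : ℕ) = 0
          · rw [hφ0 b hb0, Dm_one, Polynomial.map_zero]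
          · have hb1 : (b : ℕ) = 1 := by omega
            rw [hφ1 b hb1]
            simp [Dm_add, Dm_X, Dm_C, pderiv_X_of_ne (Sum.inl_ne_inr)]
        · have hne2 : (Sum.inr (⟨(b : ℕ) - 2, by have := b.isLt; omega⟩ : Fin (n - 1)) : σ')
              ≠ Sum.inr j := by
            intro hc
            have := congrArg Fin.val (Sum.inr.inj hc)
            simp only at this
            omega
          rw [hφ2 b h2]
          simp [Dm_add, Dm_mul, Dm_C, Dm_X, pderiv_X_of_ne hne2,
            pderiv_X_of_ne (Sum.inl_ne_inr)]
      rw [hD0, mul_zero]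
    · intro h; exact absurd (Finset.mem_univ _) h
end
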